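/- Let q be a prime power, let C be a linear code of length n over F_q, let g be a positive integer, let v ∈ F_q^n, and let χ : F_q → ℂ be a nontrivial additive character (a group homomorphism from the additive group of F_q to the nonzero complex numbers that is not identically 1). Let y : F_q^{g+1} → ℂ be any family. Then 𝔍ac^{(g)}_{C^⊥,v}(y) = |C|^{-g} · 𝔍ac^{(g)}_{C,v}(ỹ), where for a ∈ F_q^{g+1}, ỹ_a := ∑_{b_1,…,b_g ∈ F_q} χ(∑_{i=1}^{g} a_i b_i) · y_{(b_1,…,b_g,a_{g+1})}. -/

import Mathlib

open scoped Classical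

/-- The dual code `C^⊥ = {w | ∑ i, u i * w i = 0 for all u ∈ C}`. -/
def dualCode {R : Type*} [CommRing R] {n : ℕ}
    (C : Submodule R (Fin n → R)) : Submodule R (Fin n → R) where
  carrier := {w | ∀ u ∈ C, ∑ i, u i * w i = 0}
  add_mem' := by
    intro a b ha hb u hu
    have h1 := ha u hu
    have h2 := hb u hu
    simp only [Pi.add_apply, mul_add, Finset.sum_add_distrib, h1, h2, add_zero]
  zero_mem' := by
    intro u hu
    simp
  smul_mem' := by
    intro c w hw u hu
    have h := hw u hu
    show ∑ i, u i * (c • w) i = 0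
    have : (∑ i, u i * (c • w) i) = c * ∑ i, u i * w i := by
      rw [Finset.mul_sum]
      refine Finset.sum_congr rfl fun i _ => ?_
      simp only [Pi.smul_apply, smul_eq_mul]
      ring
    rw [this, h, mul_zero]

/-- The `g`-th homogeneous Jacobi polynomial `𝔍ac^{(g)}_{C,v}(y)`: the sum ranges
over all `g`-tuples of (not necessarily distinct) codewords; for
`a : Fin (g+1) → R`, the exponent of `y a` is `n_a(u_1,…,u_g,v)`, the number of
coordinates `i` with `(u_1 i, …, u_g i, v i) = a`. -/
noncomputable def JacHom {R : Type*} [CommRing R] [Fintype R]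
    {n g : ℕ} (C : Submodule R (Fin n → R)) (v : Fin n → R)
    (y : (Fin (g+1) → R) → ℂ) : ℂ :=
  ∑ u : Fin g → ↥C, ∏ a : Fin (g+1) → R,
    y a ^ (Finset.univ.filter (fun i : Fin n =>
      (∀ j : Fin g, (u j : Fin n → R) i = a j.castSucc) ∧ v i = a (Fin.last g))).card

section Aux

open Finset

variable {Fq : Type*} [Field Fq] [Fintype Fq] {n g : ℕ}

lemma addChar_map_finsum {ι : Type*} (χ : AddChar Fq ℂ) (s : Finset ι) (f : ι → Fq) :
    χ (∑ i ∈ s, f i) = ∏ i ∈ s, χ (f i) := by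
  classical
  induction s using Finset.cons_induction with
  | empty => simp
  | cons a s ha ih => rw [Finset.sum_cons, Finset.prod_cons, AddChar.map_add_eq_mul, ih]

lemma mem_dualCode (C : Submodule Fq (Fin n → Fq)) (w : Fin n → Fq) :
    w ∈ dualCode C ↔ ∀ u ∈ C, ∑ i, u i * w i = 0 := Iff.rfl

lemma jacHom_eq (C : Submodule Fq (Fin n → Fq)) (v : Fin n → Fq)
    (y : (Fin (g+1) → Fq) → ℂ) :
    JacHom C v y = ∑ u : Fin g → ↥C, ∏ i : Fin n,
      y (Fin.snoc (fun j => (u j : Fin n → Fq) i) (v i)) := by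
  unfold JacHom
  refine Finset.sum_congr rfl fun u _ => ?_
  set A : Fin n → (Fin (g+1) → Fq) := fun i => Fin.snoc (fun j => (u j : Fin n → Fq) i) (v i)
    with hA
  have key : ∀ (a : Fin (g+1) → Fq) (i : Fin n),
      ((∀ j : Fin g, (u j : Fin n → Fq) i = a j.castSucc) ∧ v i = a (Fin.last g))
        ↔ A i = a := by
    intro a i
    constructor
    · rintro ⟨h1, h2⟩
      funext k
      refine Fin.lastCases ?_ ?_ k
      · simpa [hA, Fin.snoc_last] using h2
      · intro j; simpa [hA, Fin.snoc_castSucc] using h1 j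
    · rintro rfl
      refine ⟨fun j => ?_, ?_⟩
      · simp [hA, Fin.snoc_castSucc]
      · simp [hA, Fin.snoc_last]
  calc ∏ a : Fin (g+1) → Fq, y a ^ (Finset.univ.filter (fun i : Fin n =>
          (∀ j : Fin g, (u j : Fin n → Fq) i = a j.castSucc) ∧ v i = a (Fin.last g))).card
      = ∏ a : Fin (g+1) → Fq, ∏ i ∈ Finset.univ.filter (fun i => A i = a), y a := by
        refine Finset.prod_congr rfl fun a _ => ?_
        rw [Finset.prod_const]
        congr 1
        apply congr_arg Finset.card
        exact Finset.filter_congr fun i _ => by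
          simpa using key a i
    _ = ∏ i : Fin n, y (A i) := Finset.prod_fiberwise' _ _ _

lemma char_sum (C : Submodule Fq (Fin n → Fq)) (χ : AddChar Fq ℂ) (hχ : χ ≠ 1)
    (w : Fin n → Fq) :
    ∑ u : ↥C, χ (∑ i, (u : Fin n → Fq) i * w i)
      = if w ∈ dualCode C then (Fintype.card ↥C : ℂ) else 0 := by
  classical
  split_ifs with h
  · have h1 : ∀ u : ↥C, χ (∑ i, (u : Fin n → Fq) i * w i) = 1 := fun u => by
      rw [h u u.2, AddChar.map_zero_eq_one]
    simp [h1]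
  · rw [mem_dualCode] at h
    push_neg at h
    obtain ⟨u₀, hu₀, ht₀⟩ := h
    obtain ⟨t, ht⟩ := AddChar.ne_one_iff.1 hχ
    let φ : ↥C →+ Fq :=
      { toFun := fun u => ∑ i, (u : Fin n → Fq) i * w i
        map_zero' := by simp
        map_add' := fun a b => by
          simp [add_mul, Finset.sum_add_distrib]
      }
    have key : ∑ u : ↥C, (χ.compAddMonoidHom φ) u = 0 := by
      refine AddChar.sum_eq_zero_of_ne_one ?_
      intro hψ
      set t₀ : Fq := ∑ i, u₀ i * w i with ht₀def
      set u' : ↥C := ⟨(t / t₀) • u₀, C.smul_mem _ hu₀⟩ with hu'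
      have hφ : φ u' = t := by
        show (∑ i, ((t / t₀) • u₀) i * w i) = t
        have : (∑ i, ((t / t₀) • u₀) i * w i) = (t / t₀) * ∑ i, u₀ i * w i := by
          rw [Finset.mul_sum]
          exact Finset.sum_congr rfl fun i _ => by
            simp [Pi.smul_apply, smul_eq_mul, mul_assoc]
        rw [this, ← ht₀def, div_mul_cancel₀ _ ht₀]
      have : (χ.compAddMonoidHom φ) u' = 1 := by rw [hψ]; rfl
      rw [AddChar.compAddMonoidHom_apply, hφ] at this
      exact ht this
    exact key

lemma sum_pi_submodule (D : Submodule Fq (Fin n → Fq))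
    (F : (Fin g → (Fin n → Fq)) → ℂ) :
    ∑ w : Fin g → ↥D, F (fun j => (w j : Fin n → Fq))
      = ∑ w : Fin g → (Fin n → Fq), if (∀ j, w j ∈ D) then F w else 0 := by
  classical
  calc ∑ w : Fin g → ↥D, F (fun j => (w j : Fin n → Fq))
      = ∑ x : {w : Fin g → (Fin n → Fq) // ∀ j, w j ∈ D}, F x.val :=
        Fintype.sum_equiv (Equiv.subtypePiEquivPi (p := fun _ b => b ∈ D)).symm _ _
          (fun w => rfl)
    _ = ∑ w ∈ Finset.univ.filter (fun w : Fin g → (Fin n → Fq) => ∀ j, w j ∈ D), F w :=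
        (Finset.sum_subtype _ (fun w => by simp) F).symm
    _ = _ := Finset.sum_filter _ _

end Aux

set_option maxHeartbeats 1000000 in
/-- **Theorem (MacHomo)**: MacWilliams type identity for the homogeneous Jacobi
polynomial over a finite field `F_q` (an arbitrary finite field, since `q` ranges
over all prime powers).  `χ` is a nontrivial additive character of `F_q`, and
`ỹ a := ∑_{b_1,…,b_g} χ(∑ a_i b_i) y_{(b_1,…,b_g,a_{g+1})}`. -/
theorem macwilliams_homogeneous_Fq
    {Fq : Type*} [Field Fq] [Fintype Fq]
    {n g : ℕ} (hg : 0 < g)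
    (C : Submodule Fq (Fin n → Fq)) (v : Fin n → Fq)
    (χ : AddChar Fq ℂ) (hχ : χ ≠ 1)
    (y : (Fin (g+1) → Fq) → ℂ) :
    JacHom (dualCode C) v y
      = (1 / (Fintype.card ↥C : ℂ) ^ g) *
        JacHom C v (fun a => ∑ c : Fin g → Fq,
          χ (∑ i : Fin g, a i.castSucc * c i) * y (Fin.snoc c (a (Fin.last g)))) := by
  classical
  have hcard : (Fintype.card ↥C : ℂ) ≠ 0 := Nat.cast_ne_zero.2 Fintype.card_ne_zero
  rw [jacHom_eq, jacHom_eq]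
  -- Expand the transformed variables on the right-hand side.
  have step1 : ∀ u : Fin g → ↥C,
      (∏ i : Fin n, (fun a : Fin (g+1) → Fq => ∑ c : Fin g → Fq,
          χ (∑ j : Fin g, a j.castSucc * c j) * y (Fin.snoc c (a (Fin.last g))))
        (Fin.snoc (fun j => (u j : Fin n → Fq) i) (v i)))
      = ∑ B : Fin n → (Fin g → Fq),
          χ (∑ i : Fin n, ∑ j : Fin g, (u j : Fin n → Fq) i * B i j) *
            ∏ i : Fin n, y (Fin.snoc (B i) (v i)) := by
    intro u
    have h1 : ∀ i : Fin n,
        (fun a : Fin (g+1) → Fq => ∑ c : Fin g → Fq,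
            χ (∑ j : Fin g, a j.castSucc * c j) * y (Fin.snoc c (a (Fin.last g))))
          (Fin.snoc (fun j => (u j : Fin n → Fq) i) (v i))
        = ∑ c : Fin g → Fq,
            χ (∑ j : Fin g, (u j : Fin n → Fq) i * c j) * y (Fin.snoc c (v i)) := by
      intro i
      simp only [Fin.snoc_castSucc, Fin.snoc_last]
    calc (∏ i : Fin n, (fun a : Fin (g+1) → Fq => ∑ c : Fin g → Fq,
            χ (∑ j : Fin g, a j.castSucc * c j) * y (Fin.snoc c (a (Fin.last g))))
          (Fin.snoc (fun j => (u j : Fin n → Fq) i) (v i)))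
        = ∏ i : Fin n, ∑ c : Fin g → Fq,
            χ (∑ j : Fin g, (u j : Fin n → Fq) i * c j) * y (Fin.snoc c (v i)) :=
          Finset.prod_congr rfl fun i _ => h1 i
      _ = ∑ B ∈ Fintype.piFinset (fun _ : Fin n => (Finset.univ : Finset (Fin g → Fq))),
            ∏ i : Fin n,
              χ (∑ j : Fin g, (u j : Fin n → Fq) i * B i j) * y (Fin.snoc (B i) (v i)) :=
          Finset.prod_univ_sum (fun _ : Fin n => (Finset.univ : Finset (Fin g → Fq)))
            (fun i c => χ (∑ j : Fin g, (u j : Fin n → Fq) i * c j) * y (Fin.snoc c (v i)))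
      _ = ∑ B : Fin n → (Fin g → Fq), ∏ i : Fin n,
              χ (∑ j : Fin g, (u j : Fin n → Fq) i * B i j) * y (Fin.snoc (B i) (v i)) := by
          rw [Fintype.piFinset_univ]
      _ = ∑ B : Fin n → (Fin g → Fq),
            χ (∑ i : Fin n, ∑ j : Fin g, (u j : Fin n → Fq) i * B i j) *
              ∏ i : Fin n, y (Fin.snoc (B i) (v i)) := by
          refine Finset.sum_congr rfl fun B _ => ?_
          rw [Finset.prod_mul_distrib, addChar_map_finsum]
  -- Compute the inner character sum.
  have step2 : ∀ B : Fin n → (Fin g → Fq),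
      (∑ u : Fin g → ↥C, χ (∑ i : Fin n, ∑ j : Fin g, (u j : Fin n → Fq) i * B i j))
      = if (∀ j : Fin g, (fun i => B i j) ∈ dualCode C)
          then ((Fintype.card ↥C : ℂ)) ^ g else 0 := by
    intro B
    have h1 : ∀ u : Fin g → ↥C,
        χ (∑ i : Fin n, ∑ j : Fin g, (u j : Fin n → Fq) i * B i j)
        = ∏ j : Fin g, χ (∑ i : Fin n, (u j : Fin n → Fq) i * B i j) := by
      intro u
      rw [Finset.sum_comm, addChar_map_finsum]
    calc (∑ u : Fin g → ↥C, χ (∑ i : Fin n, ∑ j : Fin g, (u j : Fin n → Fq) i * B i j))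
        = ∑ u : Fin g → ↥C, ∏ j : Fin g,
            χ (∑ i : Fin n, (u j : Fin n → Fq) i * B i j) :=
          Finset.sum_congr rfl fun u _ => h1 u
      _ = ∑ u ∈ Fintype.piFinset (fun _ : Fin g => (Finset.univ : Finset ↥C)),
            ∏ j : Fin g, χ (∑ i : Fin n, (u j : Fin n → Fq) i * B i j) := by
          rw [Fintype.piFinset_univ]
      _ = ∏ j : Fin g, ∑ c : ↥C, χ (∑ i : Fin n, (c : Fin n → Fq) i * B i j) :=
          Finset.sum_prod_piFinset (Finset.univ : Finset ↥C)
            (fun j c => χ (∑ i : Fin n, (c : Fin n → Fq) i * B i j))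
      _ = ∏ j : Fin g, (if (fun i => B i j) ∈ dualCode C
            then (Fintype.card ↥C : ℂ) else 0) :=
          Finset.prod_congr rfl fun j _ => char_sum C χ hχ _
      _ = if (∀ j : Fin g, (fun i => B i j) ∈ dualCode C)
            then ((Fintype.card ↥C : ℂ)) ^ g else 0 := by
          split_ifs with h
          · rw [Finset.prod_congr rfl (fun j _ => if_pos (h j)), Finset.prod_const,
              Finset.card_univ, Fintype.card_fin]
          · push_neg at h
            obtain ⟨j, hj⟩ := h
            exact Finset.prod_eq_zero (Finset.mem_univ j) (if_neg hj)
  -- Put the right-hand side together.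
  rw [Finset.sum_congr rfl (fun u _ => step1 u), Finset.sum_comm]
  have step3 : ∀ B : Fin n → (Fin g → Fq),
      (∑ u : Fin g → ↥C,
        χ (∑ i : Fin n, ∑ j : Fin g, (u j : Fin n → Fq) i * B i j) *
          ∏ i : Fin n, y (Fin.snoc (B i) (v i)))
      = (if (∀ j : Fin g, (fun i => B i j) ∈ dualCode C)
          then ((Fintype.card ↥C : ℂ)) ^ g else 0) *
          ∏ i : Fin n, y (Fin.snoc (B i) (v i)) := by
    intro B
    rw [← Finset.sum_mul, step2 B]
  rw [Finset.sum_congr rfl (fun B _ => step3 B)]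
  -- Reindex the left-hand side over all tuples with an indicator.
  rw [sum_pi_submodule (dualCode C)
    (fun w => ∏ i : Fin n, y (Fin.snoc (fun j => w j i) (v i)))]
  -- Reindex the right-hand side sum by transposition.
  rw [Finset.mul_sum]
  refine Fintype.sum_equiv (Equiv.piComm fun (_ : Fin g) (_ : Fin n) => Fq)
    (fun w => if (∀ j, w j ∈ dualCode C)
        then (∏ i : Fin n, y (Fin.snoc (fun j => w j i) (v i))) else 0)
    (fun B => (1 / (Fintype.card ↥C : ℂ) ^ g) *
      ((if (∀ j : Fin g, (fun i => B i j) ∈ dualCode C)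
          then ((Fintype.card ↥C : ℂ)) ^ g else 0) *
        ∏ i : Fin n, y (Fin.snoc (B i) (v i))))
    (fun w => ?_)
  show _ = (1 / (Fintype.card ↥C : ℂ) ^ g) *
      ((if (∀ j : Fin g, (fun i => w j i) ∈ dualCode C)
          then ((Fintype.card ↥C : ℂ)) ^ g else 0) *
        ∏ i : Fin n, y (Fin.snoc (fun j => w j i) (v i)))
  split_ifs with h
  · rw [← mul_assoc, one_div, inv_mul_cancel₀ (pow_ne_zero _ hcard), one_mul]
  · rw [zero_mul, mul_zero]
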